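/- arXiv:2408.00693 — 2 statements merged into one kernel-verified Lean document; each statement's English description precedes it below -/
import Mathlib

section
/- (Theorem 2) Let γ₁,…,γ_k ∈ ℂ be nonzero and define the polynomial f(γ) = (−1)^{k−1} (∏_{j=1}^k γⱼ)^{−1} ∏_{j=1}^k (γ − γⱼ). Then f(0) = −1 and f(γⱼ) = 0 for every j, and there exists z ∈ K_k(A, r₀) such that ‖r₀ − A z‖₂ ≤ ‖W‖₂ · ‖(f(λ₁), f(λ₂), …, f(λ_d))ᵀ‖₂. -/
/-- The Euclidean (ℓ²) norm of a complex vector. -/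
noncomputable def euclNorm {m : ℕ} (x : Fin m → ℂ) : ℝ :=
  Real.sqrt (∑ t, ‖x t‖ ^ 2)

/-- The operator 2-norm of a complex matrix (induced by Euclidean norms). -/
noncomputable def l2OpNorm {m k : ℕ} (W : Matrix (Fin m) (Fin k) ℂ) : ℝ :=
  ‖LinearMap.toContinuousLinearMap (Matrix.toEuclideanLin W)‖

lemma euclNorm_eq_norm {m : ℕ} (x : Fin m → ℂ) :
    euclNorm x = ‖(WithLp.equiv 2 (Fin m → ℂ)).symm x‖ := by
  rw [EuclideanSpace.norm_eq]; rfl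

lemma mulVec_euclNorm_le {m k : ℕ} (W : Matrix (Fin m) (Fin k) ℂ) (y : Fin k → ℂ) :
    euclNorm (W.mulVec y) ≤ l2OpNorm W * euclNorm y := by
  rw [euclNorm_eq_norm, euclNorm_eq_norm]
  change ‖Matrix.toEuclideanLin W ((WithLp.equiv 2 (Fin k → ℂ)).symm y)‖ ≤ _
  have := (LinearMap.toContinuousLinearMap (Matrix.toEuclideanLin W)).le_opNorm
    ((WithLp.equiv 2 (Fin k → ℂ)).symm y)
  simpa [l2OpNorm] using this

lemma neg_one_pow_aux (k : ℕ) (hk : 1 ≤ k) : (-1 : ℂ) ^ (k - 1) * (-1) ^ k = -1 := by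
  obtain ⟨m, rfl⟩ : ∃ m, k = m + 1 := ⟨k - 1, by omega⟩
  simp only [Nat.add_sub_cancel, pow_succ, ← mul_assoc, ← mul_pow]
  norm_num

/-- Theorem 2: with `f(γ) = (−1)^{k−1} (∏ γⱼ)⁻¹ ∏ (γ − γⱼ)` for nonzero
`γ₁,…,γ_k`, we have `f(0) = −1`, `f(γⱼ) = 0`, and there is `z ∈ K_k(A, r₀)` with
`‖r₀ − A z‖₂ ≤ ‖W‖₂ ‖(f(λ₁),…,f(λ_d))ᵀ‖₂`. -/
theorem gmres_residual_cluster_polynomial_bound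
    (n d : ℕ) (A : Matrix (Fin n) (Fin n) ℂ)
    (v : Fin d → (Fin n → ℂ)) (lam : Fin d → ℂ) (c : Fin d → ℂ)
    (hunit : ∀ i, euclNorm (v i) = 1)
    (heig : ∀ i, A.mulVec (v i) = lam i • v i)
    (hnz : ∀ i, lam i ≠ 0) (hdist : Function.Injective lam)
    (r₀ : Fin n → ℂ) (hr₀ : r₀ = ∑ i, c i • v i)
    (W : Matrix (Fin n) (Fin d) ℂ) (hW : W = Matrix.of fun t i => c i * v i t)
    (k : ℕ) (hk : 1 ≤ k)
    (γ : Fin k → ℂ) (hγ : ∀ j, γ j ≠ 0)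
    (f : ℂ → ℂ)
    (hf : f = fun x => (-1 : ℂ) ^ (k - 1) * (∏ j, γ j)⁻¹ * ∏ j, (x - γ j)) :
    f 0 = -1 ∧ (∀ j, f (γ j) = 0) ∧
      ∃ z ∈ Submodule.span ℂ (Set.range fun j : Fin k => (A ^ (j : ℕ)).mulVec r₀),
        euclNorm (r₀ - A.mulVec z) ≤ l2OpNorm W * euclNorm (fun i => f (lam i)) := by
  classical
  have hprodne : (∏ j, γ j) ≠ 0 := Finset.prod_ne_zero_iff.mpr fun j _ => hγ j
  have hf0 : f 0 = -1 := by
    rw [hf]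
    have h1 : (∏ j, ((0 : ℂ) - γ j)) = (-1) ^ k * ∏ j, γ j := by
      have hh : ∀ j : Fin k, (0 : ℂ) - γ j = (-1) * γ j := fun j => by ring
      simp_rw [hh]
      rw [Finset.prod_mul_distrib, Finset.prod_const]
      simp
    simp only [h1]
    rw [show (-1 : ℂ) ^ (k - 1) * (∏ j, γ j)⁻¹ * ((-1) ^ k * ∏ j, γ j)
        = (-1 : ℂ) ^ (k - 1) * (-1) ^ k * ((∏ j, γ j)⁻¹ * ∏ j, γ j) by ring,
      inv_mul_cancel₀ hprodne, neg_one_pow_aux k hk, mul_one]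
  have hfγ : ∀ j, f (γ j) = 0 := by
    intro j
    rw [hf]
    have : (∏ j', (γ j - γ j')) = 0 :=
      Finset.prod_eq_zero (Finset.mem_univ j) (by simp)
    simp [this]
  refine ⟨hf0, hfγ, ?_⟩
  -- The polynomial P with eval = f
  set P : Polynomial ℂ :=
    Polynomial.C ((-1 : ℂ) ^ (k - 1) * (∏ j, γ j)⁻¹) * ∏ j, (Polynomial.X - Polynomial.C (γ j))
    with hP
  have hPeval : ∀ x, P.eval x = f x := by
    intro x
    simp [hP, hf, Polynomial.eval_prod]
  have hdvd : Polynomial.X ∣ (P + 1) := by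
    rw [Polynomial.X_dvd_iff]
    have := hPeval 0
    rw [hf0] at this
    simp [Polynomial.coeff_zero_eq_eval_zero, this]
  obtain ⟨Q, hQ⟩ := hdvd
  have hPdeg : P.natDegree ≤ k := by
    have hprodeg : (∏ j, (Polynomial.X - Polynomial.C (γ j))).natDegree ≤ k := by
      refine le_trans (Polynomial.natDegree_prod_le _ _) ?_
      simp [Polynomial.natDegree_X_sub_C]
    refine le_trans (Polynomial.natDegree_mul_le) (le_trans (add_le_add
      (le_of_eq (Polynomial.natDegree_C _)) hprodeg) (by omega))
  have hQdeg : Q.natDegree < k := by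
    by_cases hQ0 : Q = 0
    · simp [hQ0]; omega
    · have h2 : (Polynomial.X * Q).natDegree ≤ k := by
        rw [← hQ]
        exact le_trans (Polynomial.natDegree_add_le _ _) (by simpa using hPdeg)
      rw [Polynomial.natDegree_X_mul hQ0] at h2
      omega
  -- eigenvector facts
  have heigpow : ∀ (m : ℕ) i, (A ^ m).mulVec (v i) = (lam i ^ m) • v i := by
    intro m i
    induction m with
    | zero => simp
    | succ m ih =>
      rw [pow_succ, ← Matrix.mulVec_mulVec, heig i, Matrix.mulVec_smul, ih, smul_smul,
        pow_succ, mul_comm]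
  have haevalv : ∀ (p : Polynomial ℂ) i,
      (Polynomial.aeval A p).mulVec (v i) = p.eval (lam i) • v i := by
    intro p i
    induction p using Polynomial.induction_on' with
    | add p q hp hq => simp [Matrix.add_mulVec, hp, hq, add_smul]
    | monomial m a =>
      rw [Polynomial.aeval_monomial, Polynomial.eval_monomial]
      have hm : (algebraMap ℂ (Matrix (Fin n) (Fin n) ℂ)) a * A ^ m = a • A ^ m := by
        rw [Algebra.algebraMap_eq_smul_one, smul_mul_assoc, one_mul]
      rw [hm, Matrix.smul_mulVec, heigpow, smul_smul]
  set z : Fin n → ℂ := (Polynomial.aeval A Q).mulVec r₀ with hz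
  have hzmem : z ∈ Submodule.span ℂ (Set.range fun j : Fin k => (A ^ (j : ℕ)).mulVec r₀) := by
    rw [hz, Polynomial.aeval_eq_sum_range' hQdeg]
    rw [show (∑ i ∈ Finset.range k, Q.coeff i • A ^ i).mulVec r₀
        = ∑ i ∈ Finset.range k, Q.coeff i • (A ^ i).mulVec r₀ from ?_]
    · refine Submodule.sum_mem _ fun j hj => ?_
      refine Submodule.smul_mem _ _ (Submodule.subset_span ?_)
      exact ⟨⟨j, Finset.mem_range.mp hj⟩, rfl⟩
    · funext t
      simp only [Matrix.mulVec, dotProduct, Finset.sum_apply, Matrix.sum_apply,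
        Matrix.smul_apply, smul_eq_mul, Pi.smul_apply, Finset.sum_mul, Finset.mul_sum]
      rw [Finset.sum_comm]
      simp [mul_assoc]
  refine ⟨z, hzmem, ?_⟩
  have hres : r₀ - A.mulVec z = W.mulVec (fun i => -(f (lam i))) := by
    have h1 : r₀ - A.mulVec z = (Polynomial.aeval A (1 - Polynomial.X * Q)).mulVec r₀ := by
      rw [map_sub, map_mul, map_one, Polynomial.aeval_X, Matrix.sub_mulVec, Matrix.one_mulVec,
        ← Matrix.mulVec_mulVec, hz]
    have h2 : (1 : Polynomial ℂ) - Polynomial.X * Q = -P := by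
      rw [← hQ]; ring
    rw [h1, h2, map_neg, Matrix.neg_mulVec]
    rw [show (Polynomial.aeval A P).mulVec r₀ = ∑ i, (c i * f (lam i)) • v i from ?_]
    · funext t
      rw [hW]
      simp only [Pi.neg_apply, Finset.sum_apply, Pi.smul_apply, smul_eq_mul, Matrix.mulVec,
        dotProduct, Matrix.of_apply, neg_eq_iff_eq_neg, ← Finset.sum_neg_distrib]
      congr 1; funext i; ring
    · rw [hr₀, ← Matrix.mulVecLin_apply, map_sum]
      congr 1; funext i
      rw [map_smul, Matrix.mulVecLin_apply, haevalv P i, hPeval, smul_smul]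
  rw [hres]
  refine le_trans (mulVec_euclNorm_le W _) ?_
  have : euclNorm (fun i => -(f (lam i))) = euclNorm (fun i => f (lam i)) := by
    simp [euclNorm]
  rw [this]
end

section
/- (Superlinear bound for clustered eigenvalues) Suppose the eigenvalues cluster: λᵢ = γ_{j(i)} + εᵢ for some assignment j(i) ∈ {1,…,s}, where γ₁,…,γ_s ∈ ℂ are nonzero and |εᵢ| ≤ ε ≤ 1 for all i. Let f(γ) = (−1)^{s−1} (∏_{j=1}^s γⱼ)^{−1} ∏_{j=1}^s (γ − γⱼ). Then there exists z ∈ K_s(A, r₀) such that ‖r₀ − A z‖₂ ≤ ‖W‖₂ · ε · √d · max_{1 ≤ j ≤ s} Σ_{l=1}^s |f^{(l)}(γⱼ)| / l!. -/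

-- eigen lemma
lemma aeval_mulVec_eig {n : ℕ} (A : Matrix (Fin n) (Fin n) ℂ) (w : Fin n → ℂ) (μ : ℂ)
    (h : A.mulVec w = μ • w) (P : Polynomial ℂ) :
    (Polynomial.aeval A P).mulVec w = P.eval μ • w := by
  induction P using Polynomial.induction_on' with
  | add p q hp hq =>
      simp [map_add, Matrix.add_mulVec, hp, hq, add_smul]
  | monomial k a =>
      have hpow : ∀ k : ℕ, (A ^ k).mulVec w = μ ^ k • w := by
        intro k
        induction k with
        | zero => simp [Matrix.one_mulVec]
        | succ k ih =>
            rw [pow_succ', pow_succ', ← Matrix.mulVec_mulVec, ih, Matrix.mulVec_smul, h,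
              smul_smul, mul_comm]
      rw [Polynomial.aeval_monomial, Polynomial.eval_monomial]
      rw [← Matrix.mulVec_mulVec, hpow]
      rw [Matrix.mulVec_smul, Algebra.algebraMap_eq_smul_one, Matrix.smul_mulVec,
        Matrix.one_mulVec, smul_smul, mul_comm (μ ^ k) a]

-- norm of mulVec bound
lemma euclNorm_mulVec_le {m k : ℕ} (W : Matrix (Fin m) (Fin k) ℂ) (u : Fin k → ℂ) :
    euclNorm (W.mulVec u) ≤ l2OpNorm W * euclNorm u := by
  have h := (LinearMap.toContinuousLinearMap (Matrix.toEuclideanLin W)).le_opNorm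
    ((WithLp.equiv 2 (Fin k → ℂ)).symm u)
  have h1 : ‖(LinearMap.toContinuousLinearMap (Matrix.toEuclideanLin W))
      ((WithLp.equiv 2 (Fin k → ℂ)).symm u)‖ = euclNorm (W.mulVec u) := by
    rw [LinearMap.coe_toContinuousLinearMap']
    rw [WithLp.equiv_symm_apply, Matrix.toEuclideanLin_apply_piLp_toLp]
    rw [EuclideanSpace.norm_eq]
    simp [euclNorm]
  have h2 : ‖(WithLp.equiv 2 (Fin k → ℂ)).symm u‖ = euclNorm u := by
    rw [EuclideanSpace.norm_eq]; simp [euclNorm]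
  rw [h1, h2] at h
  exact h

/-- superlinear bound for clustered eigenvalues: if the eigenvalues
cluster as `λᵢ = γ_{j(i)} + εᵢ` around nonzero centers `γ₁,…,γ_s` with `|εᵢ| ≤ ε ≤ 1`,
and `f(γ) = (−1)^{s−1} (∏ γⱼ)⁻¹ ∏ (γ − γⱼ)`, then there is `z ∈ K_s(A, r₀)` with
`‖r₀ − A z‖₂ ≤ ‖W‖₂ ε √d max_{1≤j≤s} ∑_{l=1}^s |f^{(l)}(γⱼ)|/l!`. -/
theorem gmres_superlinear_clustered_bound
    (n d : ℕ) (A : Matrix (Fin n) (Fin n) ℂ)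
    (v : Fin d → (Fin n → ℂ)) (lam : Fin d → ℂ) (c : Fin d → ℂ)
    (hunit : ∀ i, euclNorm (v i) = 1)
    (heig : ∀ i, A.mulVec (v i) = lam i • v i)
    (hnz : ∀ i, lam i ≠ 0) (hdist : Function.Injective lam)
    (r₀ : Fin n → ℂ) (hr₀ : r₀ = ∑ i, c i • v i)
    (W : Matrix (Fin n) (Fin d) ℂ) (hW : W = Matrix.of fun t i => c i * v i t)
    (s : ℕ) (hs : 1 ≤ s)
    (γ : Fin s → ℂ) (hγ : ∀ j, γ j ≠ 0)
    (assign : Fin d → Fin s) (eps : Fin d → ℂ)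
    (hlam : ∀ i, lam i = γ (assign i) + eps i)
    (ε : ℝ) (hε : ε ∈ Set.Icc (0 : ℝ) 1) (heps : ∀ i, ‖eps i‖ ≤ ε)
    (f : Polynomial ℂ)
    (hf : f = Polynomial.C ((-1 : ℂ) ^ (s - 1) * (∏ j, γ j)⁻¹) *
        ∏ j, (Polynomial.X - Polynomial.C (γ j))) :
    ∃ z ∈ Submodule.span ℂ (Set.range fun j : Fin s => (A ^ (j : ℕ)).mulVec r₀),
      euclNorm (r₀ - A.mulVec z) ≤
        l2OpNorm W * ε * Real.sqrt d *
          ⨆ j : Fin s, ∑ l ∈ Finset.Icc 1 s,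
            ‖(Polynomial.derivative^[l] f).eval (γ j)‖ / (Nat.factorial l : ℝ) := by
  obtain ⟨hε0, hε1⟩ := hε
  -- basic facts about f
  have hprodne : (∏ j, γ j) ≠ 0 := Finset.prod_ne_zero_iff.mpr fun j _ => hγ j
  have hfγ : ∀ j, f.eval (γ j) = 0 := by
    intro j
    rw [hf]
    simp only [Polynomial.eval_mul, Polynomial.eval_prod, Polynomial.eval_sub,
      Polynomial.eval_X, Polynomial.eval_C]
    have h0 : (∏ j' : Fin s, (γ j - γ j')) = 0 :=
      Finset.prod_eq_zero (Finset.mem_univ j) (sub_self _)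
    rw [h0, mul_zero]
  have hf0 : f.eval 0 = -1 := by
    have h1 : ∏ j, ((0:ℂ) - γ j) = (-1) ^ s * ∏ j, γ j := by
      calc ∏ j, ((0:ℂ) - γ j) = ∏ j, ((-1) * γ j) :=
            Finset.prod_congr rfl fun j _ => by ring
        _ = (-1) ^ s * ∏ j, γ j := by
            rw [Finset.prod_mul_distrib, Finset.prod_const, Finset.card_univ, Fintype.card_fin]
    rw [hf]
    simp only [Polynomial.eval_mul, Polynomial.eval_prod, Polynomial.eval_sub,
      Polynomial.eval_X, Polynomial.eval_C]
    rw [h1]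
    have h2 : ((-1:ℂ)^(s-1) * (∏ j, γ j)⁻¹) * ((-1)^s * ∏ j, γ j)
        = (-1:ℂ)^(s-1+s) := by
      rw [pow_add]; field_simp
    rw [h2]
    exact Odd.neg_one_pow ⟨s-1, by omega⟩
  have hfdeg : f.natDegree ≤ s := by
    rw [hf]
    refine (Polynomial.natDegree_mul_le).trans ?_
    rw [Polynomial.natDegree_C, zero_add,
      Polynomial.natDegree_prod_of_monic _ _ (fun j _ => Polynomial.monic_X_sub_C (γ j))]
    simp [Polynomial.natDegree_X_sub_C]
  set p : Polynomial ℂ := -f with hp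
  set g : Polynomial ℂ := 1 - p with hg
  have hg0 : g.coeff 0 = 0 := by
    have : g.coeff 0 = g.eval 0 := (Polynomial.coeff_zero_eq_eval_zero g).symm ▸ rfl
    rw [Polynomial.coeff_zero_eq_eval_zero, hg, hp]
    simp [hf0]
  set q : Polynomial ℂ := g.divX with hq
  have hXq : Polynomial.X * q = g := by
    have := Polynomial.X_mul_divX_add g
    rw [hg0] at this
    simpa using this
  have hgdeg : g.natDegree ≤ s := by
    rw [hg, hp, sub_neg_eq_add]
    refine (Polynomial.natDegree_add_le _ _).trans ?_
    simp [hfdeg]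
  have hqdeg : q.natDegree < s := by
    have := Polynomial.natDegree_divX_eq_natDegree_tsub_one (p := g)
    rw [hq, this]
    omega
  set z : Fin n → ℂ := (Polynomial.aeval A q).mulVec r₀ with hz
  refine ⟨z, ?_, ?_⟩
  · -- membership in Krylov space
    have hq' : Polynomial.aeval A q = ∑ k ∈ Finset.range s, q.coeff k • A ^ k :=
      Polynomial.aeval_eq_sum_range' hqdeg A
    have hsum : ∀ (F : Finset ℕ),
        ((∑ k ∈ F, q.coeff k • A ^ k).mulVec r₀) = ∑ k ∈ F, q.coeff k • (A ^ k).mulVec r₀ := by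
      intro F
      induction F using Finset.induction with
      | empty => simp [Matrix.zero_mulVec]
      | insert _ _ h ih =>
          rw [Finset.sum_insert h, Finset.sum_insert h, Matrix.add_mulVec, ih,
            Matrix.smul_mulVec]
    rw [hz, hq', hsum]
    refine Submodule.sum_mem _ fun k hk => Submodule.smul_mem _ _ ?_
    refine Submodule.subset_span ⟨⟨k, Finset.mem_range.mp hk⟩, rfl⟩
  · -- the norm bound
    set S : Fin s → ℝ := fun j => ∑ l ∈ Finset.Icc 1 s,
      ‖(Polynomial.derivative^[l] f).eval (γ j)‖ / (Nat.factorial l : ℝ) with hS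
    haveI : Nonempty (Fin s) := ⟨⟨0, hs⟩⟩
    have hSnn : ∀ j, 0 ≤ S j := fun j =>
      Finset.sum_nonneg fun l _ => div_nonneg (norm_nonneg _) (by positivity)
    have hSbdd : BddAbove (Set.range S) := Set.Finite.bddAbove (Set.finite_range S)
    have hsup0 : 0 ≤ ⨆ j, S j := le_trans (hSnn ⟨0, hs⟩) (le_ciSup hSbdd _)
    have hM0 : 0 ≤ ε * ⨆ j, S j := mul_nonneg hε0 hsup0
    -- residual polynomial identity
    have h2 : A * Polynomial.aeval A q = Polynomial.aeval A g := by
      rw [← hXq, map_mul, Polynomial.aeval_X]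
    have haev : Polynomial.aeval A p = 1 - Polynomial.aeval A g := by
      have hpg : p = 1 - g := by rw [hg]; ring
      rw [hpg, map_sub, map_one]
    have hres : r₀ - A.mulVec z = (Polynomial.aeval A p).mulVec r₀ := by
      rw [haev, Matrix.sub_mulVec, Matrix.one_mulVec, hz, Matrix.mulVec_mulVec, h2]
    set u : Fin d → ℂ := fun i => p.eval (lam i) with hu
    have hres2 : (Polynomial.aeval A p).mulVec r₀ = ∑ i, (c i * u i) • v i := by
      rw [hr₀]
      have hms : (Polynomial.aeval A p).mulVec (∑ i, c i • v i)
          = ∑ i, (Polynomial.aeval A p).mulVec (c i • v i) := by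
        simp only [← Matrix.mulVecLin_apply]
        exact map_sum _ _ _
      rw [hms]
      refine Finset.sum_congr rfl fun i _ => ?_
      rw [Matrix.mulVec_smul, aeval_mulVec_eig A (v i) (lam i) (heig i) p, smul_smul]
    have hWu : (∑ i, (c i * u i) • v i) = W.mulVec u := by
      funext t
      rw [hW]
      simp only [Matrix.mulVec, dotProduct, Matrix.of_apply, Finset.sum_apply,
        Pi.smul_apply, smul_eq_mul]
      exact Finset.sum_congr rfl fun i _ => by ring
    -- the key pointwise bound
    have hneg : ∀ (l : ℕ) (P : Polynomial ℂ),
        Polynomial.derivative^[l] (-P) = -(Polynomial.derivative^[l] P) := by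
      intro l
      induction l with
      | zero => simp
      | succ l ih =>
          intro P
          rw [Function.iterate_succ_apply, map_neg, ih, Function.iterate_succ_apply]
    have hkey : ∀ i, ‖u i‖ ≤ ε * ⨆ j, S j := by
      intro i
      have hub : ‖u i‖ ≤ ε * S (assign i) := by
        have ht : u i = (Polynomial.taylor (γ (assign i)) p).eval (eps i) := by
          rw [hu, Polynomial.taylor_eval]
          simp only
          rw [hlam i, add_comm]
        have hdeg : (Polynomial.taylor (γ (assign i)) p).natDegree < s + 1 := by
          rw [Polynomial.natDegree_taylor, hp, Polynomial.natDegree_neg]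
          omega
        rw [ht, Polynomial.eval_eq_sum_range' hdeg]
        have hrange : Finset.range (s+1) = insert 0 (Finset.Icc 1 s) := by
          ext x
          simp only [Finset.mem_range, Finset.mem_insert, Finset.mem_Icc]
          omega
        rw [hrange, Finset.sum_insert (by simp)]
        have hc0 : (Polynomial.taylor (γ (assign i)) p).coeff 0 = 0 := by
          rw [Polynomial.taylor_coeff_zero, hp, Polynomial.eval_neg, hfγ, neg_zero]
        rw [hc0, zero_mul, zero_add]
        refine (norm_sum_le _ _).trans ?_
        rw [hS, Finset.mul_sum]
        refine Finset.sum_le_sum fun l hl => ?_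
        obtain ⟨hl1, hl2⟩ := Finset.mem_Icc.mp hl
        rw [norm_mul, norm_pow]
        have hco : ‖(Polynomial.taylor (γ (assign i)) p).coeff l‖
            = ‖(Polynomial.derivative^[l] f).eval (γ (assign i))‖ / (Nat.factorial l : ℝ) := by
          rw [Polynomial.taylor_coeff]
          have hfac : (Nat.factorial l : ℂ) * (Polynomial.hasseDeriv l p).eval (γ (assign i))
              = (Polynomial.derivative^[l] p).eval (γ (assign i)) := by
            have := congrFun (Polynomial.factorial_smul_hasseDeriv (R := ℂ) (k := l)) p
            rw [← this]
            simp [Polynomial.eval_smul, nsmul_eq_mul]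
          have : (Polynomial.hasseDeriv l p).eval (γ (assign i))
              = (Polynomial.derivative^[l] p).eval (γ (assign i)) / (Nat.factorial l : ℂ) := by
            rw [eq_div_iff (by exact_mod_cast l.factorial_ne_zero), ← hfac, mul_comm]
          rw [this, norm_div, hp, hneg]
          simp [Complex.norm_natCast]
        rw [hco]
        have heps' : ‖eps i‖ ^ l ≤ ε := by
          calc ‖eps i‖ ^ l ≤ ε ^ l := pow_le_pow_left₀ (norm_nonneg _) (heps i) l
            _ ≤ ε ^ 1 := pow_le_pow_of_le_one hε0 hε1 hl1
            _ = ε := pow_one ε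
        calc ‖(Polynomial.derivative^[l] f).eval (γ (assign i))‖ / (Nat.factorial l : ℝ) * ‖eps i‖ ^ l
            ≤ ‖(Polynomial.derivative^[l] f).eval (γ (assign i))‖ / (Nat.factorial l : ℝ) * ε := by
              refine mul_le_mul_of_nonneg_left heps' (div_nonneg (norm_nonneg _) (by positivity))
          _ = ε * (‖(Polynomial.derivative^[l] f).eval (γ (assign i))‖ / (Nat.factorial l : ℝ)) := by
              ring
      refine hub.trans (mul_le_mul_of_nonneg_left ?_ hε0)
      exact le_ciSup hSbdd (assign i)
    have hu2 : euclNorm u ≤ Real.sqrt d * (ε * ⨆ j, S j) := by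
      rw [euclNorm]
      have hsum : (∑ t, ‖u t‖^2) ≤ ∑ _t : Fin d, (ε * ⨆ j, S j)^2 :=
        Finset.sum_le_sum fun t _ => pow_le_pow_left₀ (norm_nonneg _) (hkey t) 2
      refine (Real.sqrt_le_sqrt hsum).trans ?_
      rw [Finset.sum_const, Finset.card_univ, Fintype.card_fin, nsmul_eq_mul]
      rw [Real.sqrt_mul (by positivity), Real.sqrt_sq hM0]
    have hWnn : 0 ≤ l2OpNorm W := by unfold l2OpNorm; exact norm_nonneg _
    calc euclNorm (r₀ - A.mulVec z)
        = euclNorm (W.mulVec u) := by rw [hres, hres2, hWu]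
      _ ≤ l2OpNorm W * euclNorm u := euclNorm_mulVec_le W u
      _ ≤ l2OpNorm W * (Real.sqrt d * (ε * ⨆ j, S j)) :=
          mul_le_mul_of_nonneg_left hu2 hWnn
      _ = l2OpNorm W * ε * Real.sqrt d * ⨆ j, S j := by ring
end
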